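/- Let r ≥ 2 and let D = A_r(ℂ) be the Weyl algebra on the variables x₁,…,x_r. Let I be the left ideal of D generated by the operators x_i∂_j for all 1 ≤ i ≠ j ≤ r together with the operators x_i∂_i − x_j∂_j for all 1 ≤ i < j ≤ r. Then there is an isomorphism of left D-modules D/I ≅ ℂ[x₁,…,x_r] ⊕ Δ₀, where ℂ[x₁,…,x_r] ≅ D/(D∂₁ + ⋯ + D∂_r) is the polynomial module and Δ₀ = D/(Dx₁ + ⋯ + Dx_r). -/

import Mathlib

/-! STATEMENT 16: for `r ≥ 2` and `D = A_r(ℂ)`, let `I` be the left ideal generated by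
the `x_i∂_j` (`i ≠ j`) and the `x_i∂_i - x_j∂_j` (`i < j`).  Then
`D/I ≅ ℂ[x₁,…,x_r] ⊕ Δ₀` as left `D`-modules, where `ℂ[x₁,…,x_r] ≅ D/(D∂₁+⋯+D∂_r)` is
the polynomial module and `Δ₀ = D/(Dx₁+⋯+Dx_r)`. -/

open MvPolynomial

set_option maxHeartbeats 1000000
set_option synthInstance.maxHeartbeats 400000

noncomputable section

/-- The polynomial ring `ℂ[x₀, …, x_{ℓ-1}]`. -/
abbrev Pl (ℓ : ℕ) : Type := MvPolynomial (Fin ℓ) ℂ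

/-- The multiplication operator `xᵢ`. -/
noncomputable def xop (ℓ : ℕ) (i : Fin ℓ) : Module.End ℂ (Pl ℓ) := LinearMap.mulLeft ℂ (X i)

/-- The partial derivative operator `∂ᵢ`. -/
noncomputable def dop (ℓ : ℕ) (i : Fin ℓ) : Module.End ℂ (Pl ℓ) := (pderiv i).toLinearMap

/-- The Weyl algebra `A_ℓ(ℂ)` realized concretely as the `ℂ`-subalgebra of the `ℂ`-linear
endomorphisms of `ℂ[x₀,…,x_{ℓ-1}]` generated by the multiplication operators `xᵢ` and the
partial-derivative operators `∂ᵢ`. -/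
noncomputable def Dsub (ℓ : ℕ) : Subalgebra ℂ (Module.End ℂ (Pl ℓ)) :=
  Algebra.adjoin ℂ (Set.range (xop ℓ) ∪ Set.range (dop ℓ))

/-- The Weyl algebra `D = A_ℓ(ℂ)`. -/
noncomputable def DW (ℓ : ℕ) : Type := Dsub ℓ

noncomputable instance (ℓ : ℕ) : Ring (DW ℓ) := inferInstanceAs (Ring (Dsub ℓ))
noncomputable instance (ℓ : ℕ) : Algebra ℂ (DW ℓ) := inferInstanceAs (Algebra ℂ (Dsub ℓ))

/-- `xᵢ` as an element of the Weyl algebra. -/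
noncomputable def xel (ℓ : ℕ) (i : Fin ℓ) : DW ℓ :=
  (⟨xop ℓ i, Algebra.subset_adjoin (Set.mem_union_left _ ⟨i, rfl⟩)⟩ : Dsub ℓ)

/-- `∂ᵢ` as an element of the Weyl algebra. -/
noncomputable def del (ℓ : ℕ) (i : Fin ℓ) : DW ℓ :=
  (⟨dop ℓ i, Algebra.subset_adjoin (Set.mem_union_right _ ⟨i, rfl⟩)⟩ : Dsub ℓ)

/-- `D` acts on the polynomial ring by applying endomorphisms. -/
noncomputable instance (r : ℕ) : Module (DW r) (Pl r) :=
  inferInstanceAs (Module (Dsub r) (Pl r))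

/-- The left ideal generated by the operators `x_i∂_j` (`i ≠ j`) and
`x_i∂_i - x_j∂_j` (`i < j`) — the image of `sl_r(ℂ)` acting by vector fields. -/
noncomputable def Isl (r : ℕ) : Submodule (DW r) (DW r) :=
  Submodule.span (DW r)
    ({y : DW r | ∃ i j : Fin r, i ≠ j ∧ y = xel r i * del r j} ∪
     {y : DW r | ∃ i j : Fin r, i < j ∧ y = xel r i * del r i - xel r j * del r j})

/-- `Δ₀ = D/(Dx₁ + ⋯ + Dx_r)`. -/
noncomputable abbrev Delta0 (r : ℕ) : Type :=
  DW r ⧸ Submodule.span (DW r) (Set.range (xel r))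

/-- The polynomial module `D/(D∂₁ + ⋯ + D∂_r)`. -/
noncomputable abbrev PolMod (r : ℕ) : Type :=
  DW r ⧸ Submodule.span (DW r) (Set.range (del r))

namespace Stmt16

open Submodule

variable {r : ℕ}

lemma pderiv_comm' {σ R : Type*} [CommSemiring R] (i j : σ) (p : MvPolynomial σ R) :
    pderiv i (pderiv j p) = pderiv j (pderiv i p) := by
  induction p using MvPolynomial.induction_on with
  | C a => simp
  | add p q hp hq => simp [hp, hq]
  | mul_X p k ih => classical
      simp [pderiv_mul, ih, pderiv_X, Pi.single_apply, apply_ite (pderiv i), apply_ite (pderiv j)]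
      ring

lemma mulLeft_mem (r : ℕ) (p : Pl r) : LinearMap.mulLeft ℂ p ∈ Dsub r := by
  have hp : p ∈ Algebra.adjoin ℂ (Set.range (X : Fin r → Pl r)) := by
    rw [MvPolynomial.adjoin_range_X]; trivial
  induction hp using Algebra.adjoin_induction with
  | mem q hq =>
      obtain ⟨i, rfl⟩ := hq
      exact Algebra.subset_adjoin (Set.mem_union_left _ ⟨i, rfl⟩)
  | algebraMap c =>
      have : LinearMap.mulLeft ℂ ((algebraMap ℂ (Pl r)) c)
          = algebraMap ℂ (Module.End ℂ (Pl r)) c := by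
        apply LinearMap.ext; intro q
        simp [LinearMap.mulLeft_apply, Module.algebraMap_end_apply, Algebra.smul_def]
      rw [this]; exact (Dsub r).algebraMap_mem c
  | add a b ha hb iha ihb =>
      have : LinearMap.mulLeft ℂ (a + b) = LinearMap.mulLeft ℂ a + LinearMap.mulLeft ℂ b := by
        apply LinearMap.ext; intro q; simp [add_mul]
      rw [this]; exact add_mem iha ihb
  | mul a b ha hb iha ihb =>
      have : LinearMap.mulLeft ℂ (a * b) = LinearMap.mulLeft ℂ a * LinearMap.mulLeft ℂ b := by
        apply LinearMap.ext; intro q; simp [mul_assoc]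
      rw [this]; exact mul_mem iha ihb

/-- `mulLeft` as an algebra hom into the Weyl algebra. -/
noncomputable def XelA (r : ℕ) : Pl r →ₐ[ℂ] Dsub r :=
  AlgHom.codRestrict (Algebra.lmul ℂ (Pl r)) (Dsub r) (mulLeft_mem r)

/-- `mulLeft` valued in `DW`. -/
noncomputable def Xe (r : ℕ) (p : Pl r) : DW r := XelA r p

lemma Xe_mul (p q : Pl r) : Xe r (p * q) = Xe r p * Xe r q := map_mul (XelA r) p q
lemma Xe_add (p q : Pl r) : Xe r (p + q) = Xe r p + Xe r q := map_add (XelA r) p q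
lemma Xe_zero : Xe r (0 : Pl r) = 0 := map_zero (XelA r)

lemma xel_eq (i : Fin r) : xel r i = Xe r (X i) := Subtype.ext rfl

lemma del_Xe (i : Fin r) (p : Pl r) :
    del r i * Xe r p = Xe r p * del r i + Xe r (pderiv i p) := by
  apply Subtype.ext
  show dop r i * LinearMap.mulLeft ℂ p
      = LinearMap.mulLeft ℂ p * dop r i + LinearMap.mulLeft ℂ (pderiv i p)
  apply LinearMap.ext; intro q
  simp [dop, Module.End.mul_apply, pderiv_mul, add_comm, mul_comm]

lemma del_comm (i j : Fin r) : del r i * del r j = del r j * del r i := by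
  apply Subtype.ext
  show dop r i * dop r j = dop r j * dop r i
  apply LinearMap.ext; intro q
  simpa [dop, Module.End.mul_apply] using pderiv_comm' i j q

lemma xel_comm (i j : Fin r) : xel r i * xel r j = xel r j * xel r i := by
  rw [xel_eq, xel_eq, ← Xe_mul, ← Xe_mul, mul_comm]

lemma del_xel_ne {i j : Fin r} (h : i ≠ j) : del r j * xel r i = xel r i * del r j := by
  rw [xel_eq, del_Xe, pderiv_X_of_ne h, Xe_zero, add_zero]

lemma del_xel_self (i : Fin r) : del r i * xel r i = xel r i * del r i + 1 := by
  rw [xel_eq, del_Xe, pderiv_X_self]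
  norm_num [Xe]
  rfl

/-- generator membership -/
lemma gen1 {i j : Fin r} (h : i ≠ j) : xel r i * del r j ∈ Isl r :=
  subset_span (Or.inl ⟨i, j, h, rfl⟩)

lemma gen2 {i j : Fin r} (h : i ≠ j) :
    xel r i * del r i - xel r j * del r j ∈ Isl r := by
  rcases h.lt_or_gt with hlt | hlt
  · exact subset_span (Or.inr ⟨i, j, hlt, rfl⟩)
  · have hmem : xel r j * del r j - xel r i * del r i ∈ Isl r :=
      subset_span (Or.inr ⟨j, i, hlt, rfl⟩)
    simpa using neg_mem hmem

/-- the Euler operator -/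
noncomputable def Esum (r : ℕ) : DW r := ∑ i, xel r i * del r i

/-- an index different from `j`, when `2 ≤ r` -/
lemma exists_ne (hr : 2 ≤ r) (j : Fin r) : ∃ k : Fin r, k ≠ j := by
  rcases Nat.lt_or_ge 0 (j : ℕ) with h | h
  · exact ⟨⟨0, by omega⟩, by simp [Fin.ext_iff]; omega⟩
  · exact ⟨⟨1, by omega⟩, by simp [Fin.ext_iff]; omega⟩

lemma xel_mul_Esum (hr : 2 ≤ r) (j : Fin r) : xel r j * Esum r ∈ Isl r := by
  rw [Esum, Finset.mul_sum]
  refine sum_mem fun i _ => ?_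
  by_cases h : i = j
  · subst h
    obtain ⟨k, hk⟩ := exists_ne hr i
    have hc : xel r i * (xel r k * del r k) = xel r k * (xel r i * del r k) := by
      rw [← mul_assoc, xel_comm, mul_assoc]
    have key : xel r i * (xel r i * del r i)
        = xel r i * (xel r i * del r i - xel r k * del r k)
          + xel r k * (xel r i * del r k) := by
      rw [mul_sub, ← hc, sub_add_cancel]
    rw [key]
    exact add_mem (smul_mem _ _ (gen2 (Ne.symm hk))) (smul_mem _ _ (gen1 (Ne.symm hk)))
  · have hc : xel r j * (xel r i * del r i) = xel r i * (xel r j * del r i) := by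
      rw [← mul_assoc, xel_comm, mul_assoc]
    rw [hc]
    exact smul_mem _ _ (gen1 (Ne.symm h))

lemma key_ne {i j : Fin r} (h : i ≠ j) :
    del r j * (xel r i * del r i) + del r j = del r i * (xel r i * del r j) := by
  calc del r j * (xel r i * del r i) + del r j
      = (del r j * xel r i) * del r i + del r j := by rw [mul_assoc]
    _ = (xel r i * del r j) * del r i + del r j := by rw [del_xel_ne h]
    _ = xel r i * (del r j * del r i) + del r j := by rw [mul_assoc]
    _ = xel r i * (del r i * del r j) + del r j := by rw [del_comm]
    _ = (xel r i * del r i) * del r j + del r j := by rw [mul_assoc]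
    _ = (xel r i * del r i + 1) * del r j := by rw [add_mul, one_mul]
    _ = (del r i * xel r i) * del r j := by rw [del_xel_self]
    _ = del r i * (xel r i * del r j) := by rw [mul_assoc]

lemma del_mul_Esum (hr : 2 ≤ r) (j : Fin r) :
    del r j * Esum r + (r : ℂ) • del r j ∈ Isl r := by
  have hsum : del r j * Esum r + (r : ℂ) • del r j
      = ∑ i : Fin r, (del r j * (xel r i * del r i) + del r j) := by
    simp only [Esum, Finset.mul_sum]
    rw [Finset.sum_add_distrib, Finset.sum_const, Finset.card_univ,
      Fintype.card_fin, ← Nat.cast_smul_eq_nsmul ℂ]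
  rw [hsum]
  refine sum_mem fun i _ => ?_
  by_cases h : i = j
  · subst h
    obtain ⟨k, hk⟩ := exists_ne hr i
    have key : del r i * (xel r i * del r i) + del r i
        = del r i * (xel r i * del r i - xel r k * del r k)
          + del r k * (xel r k * del r i) := by
      rw [mul_sub]
      have h2 : del r i * (xel r k * del r k) + del r i = del r k * (xel r k * del r i) :=
        key_ne hk
      rw [← h2]; abel
    rw [key]
    exact add_mem (smul_mem _ _ (gen2 (Ne.symm hk))) (smul_mem _ _ (gen1 hk))
  · rw [key_ne h]
    exact smul_mem _ _ (gen1 h)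

lemma Esum_add (r : ℕ) : Esum r + (r : ℂ) • (1 : DW r) = ∑ i, del r i * xel r i := by
  simp only [Esum]
  rw [Finset.sum_congr rfl fun i _ => del_xel_self i, Finset.sum_add_distrib, Finset.sum_const,
    Finset.card_univ, Fintype.card_fin, ← Nat.cast_smul_eq_nsmul ℂ]

end Stmt16

namespace Stmt16
open Submodule
variable {r : ℕ}

/-- `D∂₁+⋯+D∂_r` -/
noncomputable abbrev N1 (r : ℕ) : Submodule (DW r) (DW r) := span (DW r) (Set.range (del r))
/-- `Dx₁+⋯+Dx_r` -/
noncomputable abbrev N2 (r : ℕ) : Submodule (DW r) (DW r) := span (DW r) (Set.range (xel r))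

lemma del_mem_N1 (i : Fin r) : del r i ∈ N1 r := subset_span ⟨i, rfl⟩
lemma xel_mem_N2 (i : Fin r) : xel r i ∈ N2 r := subset_span ⟨i, rfl⟩

lemma mul_del_mem (a : DW r) (i : Fin r) : a * del r i ∈ N1 r := smul_mem _ a (del_mem_N1 i)
lemma mul_xel_mem (a : DW r) (i : Fin r) : a * xel r i ∈ N2 r := smul_mem _ a (xel_mem_N2 i)

lemma Isl_le_N1 : Isl r ≤ N1 r := by
  rw [Isl, span_le]
  rintro y (⟨i, j, hij, rfl⟩ | ⟨i, j, hij, rfl⟩)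
  · exact mul_del_mem _ _
  · exact sub_mem (mul_del_mem _ _) (mul_del_mem _ _)

lemma Isl_le_N2 : Isl r ≤ N2 r := by
  rw [Isl, span_le]
  rintro y (⟨i, j, hij, rfl⟩ | ⟨i, j, hij, rfl⟩)
  · rw [← del_xel_ne hij]; exact mul_xel_mem _ _
  · have h1 : xel r i * del r i = del r i * xel r i - 1 := by
      rw [del_xel_self]; abel
    have h2 : xel r j * del r j = del r j * xel r j - 1 := by
      rw [del_xel_self]; abel
    rw [h1, h2]
    have heq : del r i * xel r i - 1 - (del r j * xel r j - 1)
        = del r i * xel r i - del r j * xel r j := by abel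
    rw [heq]
    exact sub_mem (mul_xel_mem _ _) (mul_xel_mem _ _)

lemma Esum_mem_N1 (r : ℕ) : Esum r ∈ N1 r := sum_mem fun i _ => mul_del_mem _ _

section uv
variable (r : ℕ)

/-- `u = 1 + E/r` -/
noncomputable def uu : DW r := 1 + (r : ℂ)⁻¹ • Esum r
/-- `v = -E/r` -/
noncomputable def vv : DW r := -((r : ℂ)⁻¹ • Esum r)

lemma uu_add_vv : uu r + vv r = 1 := by rw [uu, vv]; abel

end uv

lemma rC_ne (hr : 2 ≤ r) : (r : ℂ) ≠ 0 := by
  have h0 : (r : ℕ) ≠ 0 := by omega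
  exact_mod_cast Nat.cast_ne_zero.mpr h0

lemma uu_sub_one_mem_N1 : uu r - 1 ∈ N1 r := by
  rw [uu]
  simpa using smul_of_tower_mem (N1 r) ((r:ℂ)⁻¹) (Esum_mem_N1 r)

lemma vv_mem_N1 : vv r ∈ N1 r := by
  rw [vv]
  exact neg_mem (smul_of_tower_mem _ _ (Esum_mem_N1 r))

lemma uu_mem_N2 (hr : 2 ≤ r) : uu r ∈ N2 r := by
  have huv : uu r = (r : ℂ)⁻¹ • (Esum r + (r : ℂ) • (1 : DW r)) := by
    rw [smul_add, smul_smul, inv_mul_cancel₀ (rC_ne hr), one_smul, uu, add_comm]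
  rw [huv, Esum_add]
  exact smul_of_tower_mem _ _ (sum_mem fun i _ => mul_xel_mem _ _)

lemma vv_sub_one_mem_N2 (hr : 2 ≤ r) : vv r - 1 ∈ N2 r := by
  have heq : vv r - 1 = -(uu r) := by rw [uu, vv]; abel
  rw [heq]
  exact neg_mem (uu_mem_N2 hr)

lemma del_mul_uu (hr : 2 ≤ r) (j : Fin r) : del r j * uu r ∈ Isl r := by
  have key : del r j * uu r = (r : ℂ)⁻¹ • (del r j * Esum r + (r : ℂ) • del r j) := by
    rw [uu, mul_add, mul_one, mul_smul_comm, smul_add, smul_smul,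
      inv_mul_cancel₀ (rC_ne hr), one_smul, add_comm]
  rw [key]
  exact smul_of_tower_mem _ _ (del_mul_Esum hr j)

lemma xel_mul_vv (hr : 2 ≤ r) (j : Fin r) : xel r j * vv r ∈ Isl r := by
  have key : xel r j * vv r = -((r : ℂ)⁻¹ • (xel r j * Esum r)) := by
    rw [vv, mul_neg, mul_smul_comm]
  rw [key]
  exact neg_mem (smul_of_tower_mem _ _ (xel_mul_Esum hr j))

/-- turn a membership proof into an element of `DW`. -/
noncomputable def mkD {r : ℕ} {x : Module.End ℂ (Pl r)} (hx : x ∈ Dsub r) : DW r := ⟨x, hx⟩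

/-- decomposition `D = mulLeft(ℂ[x]) + D∂` -/
lemma exists_decomp (d : DW r) : ∃ p : Pl r, d - Xe r p ∈ N1 r := by
  obtain ⟨x, hx⟩ := d
  have hx' : x ∈ Algebra.adjoin ℂ (Set.range (xop r) ∪ Set.range (dop r)) := hx
  have main : ∀ q : Pl r, ∃ p : Pl r, mkD hx' * Xe r q - Xe r p ∈ N1 r := by
    clear hx
    induction hx' using Algebra.adjoin_induction with
    | mem y hy =>
        intro q
        rcases hy with ⟨i, rfl⟩ | ⟨i, rfl⟩
        · show ∃ p, xel r i * Xe r q - Xe r p ∈ N1 r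
          refine ⟨X i * q, ?_⟩
          rw [xel_eq, ← Xe_mul, sub_self]
          exact zero_mem _
        · show ∃ p, del r i * Xe r q - Xe r p ∈ N1 r
          refine ⟨pderiv i q, ?_⟩
          rw [del_Xe, add_sub_cancel_right]
          exact mul_del_mem _ _
    | algebraMap c =>
        intro q
        show ∃ p, algebraMap ℂ (DW r) c * Xe r q - Xe r p ∈ N1 r
        refine ⟨C c * q, ?_⟩
        have hC : algebraMap ℂ (DW r) c = Xe r (C c) := by
          have : (C c : Pl r) = algebraMap ℂ (Pl r) c := rfl
          rw [this, Xe, AlgHom.commutes]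
          rfl
        rw [hC, ← Xe_mul, sub_self]
        exact zero_mem _
    | add a b ha hb iha ihb =>
        intro q
        obtain ⟨p₁, h₁⟩ := iha q
        obtain ⟨p₂, h₂⟩ := ihb q
        show ∃ p, (mkD ha + mkD hb) * Xe r q - Xe r p ∈ N1 r
        refine ⟨p₁ + p₂, ?_⟩
        have heq : (mkD ha + mkD hb) * Xe r q - Xe r (p₁ + p₂)
            = (mkD ha * Xe r q - Xe r p₁) + (mkD hb * Xe r q - Xe r p₂) := by
          rw [Xe_add, add_mul]; abel
        rw [heq]
        exact add_mem h₁ h₂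
    | mul a b ha hb iha ihb =>
        intro q
        obtain ⟨p₁, h₁⟩ := ihb q
        obtain ⟨p₂, h₂⟩ := iha p₁
        show ∃ p, (mkD ha * mkD hb) * Xe r q - Xe r p ∈ N1 r
        refine ⟨p₂, ?_⟩
        have heq : (mkD ha * mkD hb) * Xe r q - Xe r p₂
            = mkD ha * (mkD hb * Xe r q - Xe r p₁) + (mkD ha * Xe r p₁ - Xe r p₂) := by
          rw [mul_sub, mul_assoc]; abel
        rw [heq]
        exact add_mem (smul_mem _ _ h₁) h₂
  obtain ⟨p, hp⟩ := main 1
  refine ⟨p, ?_⟩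
  have h1 : Xe r (1 : Pl r) = 1 := map_one (XelA r)
  have : mkD hx' * Xe r (1 : Pl r) = mkD hx' := by rw [h1, mul_one]
  rw [this] at hp
  exact hp

lemma Xe_smul_one (p : Pl r) : Xe r p • (1 : Pl r) = p := by
  show LinearMap.mulLeft ℂ p 1 = p
  simp

lemma del_smul_one (i : Fin r) : (del r i : DW r) • (1 : Pl r) = 0 := by
  show dop r i 1 = 0
  simp [dop]

end Stmt16

theorem stmt_16 (r : ℕ) (hr : 2 ≤ r) :
    -- `D/I ≅ ℂ[x₁,…,x_r] ⊕ Δ₀`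
    Nonempty ((DW r ⧸ Isl r) ≃ₗ[DW r] (PolMod r × Delta0 r)) ∧
    -- where `D/(D∂₁+⋯+D∂_r)` is the polynomial module `ℂ[x₁,…,x_r]`
    Nonempty (PolMod r ≃ₗ[DW r] Pl r) := by
  open Stmt16 in
  constructor
  · -- first equivalence
    have hker : Isl r ≤ LinearMap.ker (((N1 r).mkQ).prod ((N2 r).mkQ)) := by
      rw [LinearMap.ker_prod, Submodule.ker_mkQ, Submodule.ker_mkQ]
      exact le_inf Isl_le_N1 Isl_le_N2
    set Φ : (DW r ⧸ Isl r) →ₗ[DW r] (PolMod r × Delta0 r) :=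
      Submodule.liftQ (Isl r) (((N1 r).mkQ).prod ((N2 r).mkQ)) hker with hΦ
    have h1 : N1 r ≤ LinearMap.ker (LinearMap.toSpanSingleton (DW r) (DW r ⧸ Isl r)
        (Submodule.Quotient.mk (uu r))) := by
      rw [Submodule.span_le]
      rintro y ⟨j, rfl⟩
      simp only [SetLike.mem_coe, LinearMap.mem_ker, LinearMap.toSpanSingleton_apply]
      have hs : del r j • (Submodule.Quotient.mk (uu r) : DW r ⧸ Isl r)
          = Submodule.Quotient.mk (del r j * uu r) := by
        rw [← Submodule.Quotient.mk_smul]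
        rfl
      rw [hs, Submodule.Quotient.mk_eq_zero]
      exact del_mul_uu hr j
    have h2 : N2 r ≤ LinearMap.ker (LinearMap.toSpanSingleton (DW r) (DW r ⧸ Isl r)
        (Submodule.Quotient.mk (vv r))) := by
      rw [Submodule.span_le]
      rintro y ⟨j, rfl⟩
      simp only [SetLike.mem_coe, LinearMap.mem_ker, LinearMap.toSpanSingleton_apply]
      have hs : xel r j • (Submodule.Quotient.mk (vv r) : DW r ⧸ Isl r)
          = Submodule.Quotient.mk (xel r j * vv r) := by
        rw [← Submodule.Quotient.mk_smul]
        rfl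
      rw [hs, Submodule.Quotient.mk_eq_zero]
      exact xel_mul_vv hr j
    set ψ₁ : PolMod r →ₗ[DW r] (DW r ⧸ Isl r) :=
      Submodule.liftQ (N1 r) (LinearMap.toSpanSingleton (DW r) _ (Submodule.Quotient.mk (uu r))) h1
      with hψ₁
    set ψ₂ : Delta0 r →ₗ[DW r] (DW r ⧸ Isl r) :=
      Submodule.liftQ (N2 r) (LinearMap.toSpanSingleton (DW r) _ (Submodule.Quotient.mk (vv r))) h2
      with hψ₂
    have smul_mk : ∀ (d w : DW r), d • (Submodule.Quotient.mk w : DW r ⧸ Isl r)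
        = Submodule.Quotient.mk (d * w) := fun d w => by
      rw [← Submodule.Quotient.mk_smul]; rfl
    refine ⟨LinearEquiv.ofLinear Φ (ψ₁.coprod ψ₂) ?_ ?_⟩
    · -- Φ ∘ Ψ = id
      apply LinearMap.ext
      rintro ⟨a, b⟩
      obtain ⟨d, rfl⟩ := Submodule.Quotient.mk_surjective _ a
      obtain ⟨e, rfl⟩ := Submodule.Quotient.mk_surjective _ b
      have hΨ : (ψ₁.coprod ψ₂) (Submodule.Quotient.mk d, Submodule.Quotient.mk e)
          = Submodule.Quotient.mk (d * uu r + e * vv r) := by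
        rw [LinearMap.coprod_apply, hψ₁, hψ₂, Submodule.liftQ_apply, Submodule.liftQ_apply,
          LinearMap.toSpanSingleton_apply, LinearMap.toSpanSingleton_apply, smul_mk, smul_mk,
          ← Submodule.Quotient.mk_add]
      rw [LinearMap.comp_apply, hΨ, LinearMap.id_apply, hΦ, Submodule.liftQ_apply,
        LinearMap.prod_apply]
      have e1 : (N1 r).mkQ (d * uu r + e * vv r) = (N1 r).mkQ d := by
        rw [Submodule.mkQ_apply, Submodule.mkQ_apply, Submodule.Quotient.eq]
        have heq : d * uu r + e * vv r - d = d * (uu r - 1) + e * vv r := by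
          rw [mul_sub, mul_one]; abel
        rw [heq]
        exact add_mem (Submodule.smul_mem _ _ uu_sub_one_mem_N1) (Submodule.smul_mem _ _ vv_mem_N1)
      have e2 : (N2 r).mkQ (d * uu r + e * vv r) = (N2 r).mkQ e := by
        rw [Submodule.mkQ_apply, Submodule.mkQ_apply, Submodule.Quotient.eq]
        have heq : d * uu r + e * vv r - e = d * uu r + e * (vv r - 1) := by
          rw [mul_sub, mul_one]; abel
        rw [heq]
        exact add_mem (Submodule.smul_mem _ _ (uu_mem_N2 hr))
          (Submodule.smul_mem _ _ (vv_sub_one_mem_N2 hr))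
      rw [Function.prod, e1, e2]
      rfl
    · -- Ψ ∘ Φ = id
      apply Submodule.linearMap_qext
      apply LinearMap.ext
      intro d
      simp only [LinearMap.comp_apply, Submodule.mkQ_apply, LinearMap.id_apply]
      rw [hΦ, Submodule.liftQ_apply, LinearMap.prod_apply, Function.prod, Submodule.mkQ_apply,
        Submodule.mkQ_apply, LinearMap.coprod_apply, hψ₁, hψ₂, Submodule.liftQ_apply,
        Submodule.liftQ_apply, LinearMap.toSpanSingleton_apply, LinearMap.toSpanSingleton_apply,
        smul_mk, smul_mk, ← Submodule.Quotient.mk_add, ← mul_add, uu_add_vv, mul_one]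
  · -- second equivalence
    have hker : N1 r ≤ LinearMap.ker (LinearMap.toSpanSingleton (DW r) (Pl r) 1) := by
      rw [Submodule.span_le]
      rintro y ⟨i, rfl⟩
      simp only [SetLike.mem_coe, LinearMap.mem_ker, LinearMap.toSpanSingleton_apply]
      exact del_smul_one i
    set μ : PolMod r →ₗ[DW r] Pl r :=
      Submodule.liftQ (N1 r) (LinearMap.toSpanSingleton (DW r) (Pl r) 1) hker with hμ
    have hinj : Function.Injective μ := by
      rw [← LinearMap.ker_eq_bot]
      apply Submodule.ker_liftQ_eq_bot
      intro d hd
      rw [LinearMap.mem_ker, LinearMap.toSpanSingleton_apply] at hd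
      obtain ⟨p, hp⟩ := exists_decomp d
      have hkill : (d - Xe r p) • (1 : Pl r) = 0 := by
        have := hker hp
        rwa [LinearMap.mem_ker, LinearMap.toSpanSingleton_apply] at this
      rw [sub_smul, hd, Xe_smul_one, zero_sub, neg_eq_zero] at hkill
      rw [hkill, Xe_zero, sub_zero] at hp
      exact hp
    have hsurj : Function.Surjective μ := by
      intro p
      refine ⟨Submodule.Quotient.mk (Xe r p), ?_⟩
      rw [hμ, Submodule.liftQ_apply, LinearMap.toSpanSingleton_apply, Xe_smul_one]
    exact ⟨LinearEquiv.ofBijective μ ⟨hinj, hsurj⟩⟩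

end
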